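/- As x → ∞, γ0(x)/x³ converges to a finite positive limit (namely 1/3), where γ0(x) = ∫_ℝ (n0(y)+f0(y+x))·y²·sgn(y) dy. -/

import Mathlib

open MeasureTheory Real

noncomputable def f0 (x : ℝ) : ℝ := 1 / (Real.exp x + 1)
noncomputable def n0 (y : ℝ) : ℝ := 1 / (Real.exp y - 1)
noncomputable def w (x : ℝ) : ℝ := f0 x * (1 - f0 x)
noncomputable def k0 (x y : ℝ) : ℝ := (n0 y + f0 (y + x)) * y ^ 2 * Real.sign y
noncomputable def K0bar (e u : ℝ) : ℝ := (n0 (u - e) + f0 u) * (u - e) ^ 2 * Real.sign (u - e)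
noncomputable def Gamma0 (e : ℝ) : ℝ := ∫ u, K0bar e u
noncomputable def gamma0 (x : ℝ) : ℝ := ∫ y, k0 x y

open Filter Set

/-! ### Auxiliary definitions -/

noncomputable def Fg (x t : ℝ) : ℝ := (n0 (x * t) + f0 (x * t + x)) * t ^ 2 * Real.sign t

noncomputable def bnd (t : ℝ) : ℝ := 4 * (t ^ 2 + 1) * Real.exp (1 - |t|)

noncomputable def Glim (t : ℝ) : ℝ := if t ∈ Set.Ioo (-1 : ℝ) 0 then t ^ 2 else 0

/-! ### Basic facts -/

lemma measurable_rsign : Measurable Real.sign := by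
  have : Real.sign = fun r : ℝ => if r < 0 then (-1 : ℝ) else if 0 < r then 1 else 0 := by
    funext r; rfl
  rw [this]
  exact Measurable.ite (measurableSet_lt measurable_id measurable_const) measurable_const
    (Measurable.ite (measurableSet_lt measurable_const measurable_id) measurable_const
      measurable_const)

lemma abs_rsign_le (t : ℝ) : |Real.sign t| ≤ 1 := by
  rcases Real.sign_apply_eq t with h | h | h <;> rw [h] <;> norm_num

lemma f0_pos (u : ℝ) : 0 < f0 u := by
  unfold f0; positivity

lemma f0_le_one (u : ℝ) : f0 u ≤ 1 := by
  unfold f0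
  rw [div_le_one (by positivity)]
  nlinarith [Real.exp_pos u]

lemma f0_le_exp_neg (u : ℝ) : f0 u ≤ Real.exp (-u) := by
  unfold f0
  rw [Real.exp_neg, one_div, inv_le_inv₀ (by positivity) (Real.exp_pos u)]
  linarith

lemma f0_add_f0_neg (u : ℝ) : f0 u + f0 (-u) = 1 := by
  unfold f0
  rw [Real.exp_neg]
  have h := Real.exp_pos u
  field_simp
  ring

lemma n0_pos {u : ℝ} (hu : 0 < u) : 0 < n0 u := by
  unfold n0
  have : (1 : ℝ) < Real.exp u := by
    rw [← Real.exp_zero]; exact Real.exp_lt_exp.2 hu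
  have : (0:ℝ) < Real.exp u - 1 := by linarith
  positivity

lemma n0_le_inv {u : ℝ} (hu : 0 < u) : n0 u ≤ 1 / u := by
  unfold n0
  have h1 : u ≤ Real.exp u - 1 := by linarith [Real.add_one_le_exp u]
  exact one_div_le_one_div_of_le hu h1

lemma n0_anti {a b : ℝ} (ha : 0 < a) (hab : a ≤ b) : n0 b ≤ n0 a := by
  unfold n0
  have h1 : (0 : ℝ) < Real.exp a - 1 := by
    have : (1 : ℝ) < Real.exp a := by rw [← Real.exp_zero]; exact Real.exp_lt_exp.2 ha
    linarith
  exact one_div_le_one_div_of_le h1 (by simp [Real.exp_le_exp, hab])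

lemma n0_le_two_exp_neg {u : ℝ} (hu : 1 ≤ u) : n0 u ≤ 2 * Real.exp (-u) := by
  unfold n0
  have h2 : (2 : ℝ) ≤ Real.exp u := by
    calc (2:ℝ) ≤ Real.exp 1 := by
          have := Real.add_one_le_exp 1; linarith
    _ ≤ Real.exp u := Real.exp_le_exp.2 hu
  have h1 : (0 : ℝ) < Real.exp u / 2 := by positivity
  calc 1 / (Real.exp u - 1) ≤ 1 / (Real.exp u / 2) :=
        one_div_le_one_div_of_le h1 (by linarith)
    _ = 2 * Real.exp (-u) := by rw [Real.exp_neg]; field_simp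


lemma exp_lt_one_of_neg {u : ℝ} (hu : u < 0) : Real.exp u < 1 := by
  rw [← Real.exp_zero]; exact Real.exp_lt_exp.2 hu

lemma abs_n0_le {u : ℝ} (hu : u < 0) : |n0 u| ≤ (1 - u) / (-u) := by
  have he : Real.exp u < 1 := exp_lt_one_of_neg hu
  have hep := Real.exp_pos u
  have h1u : (0:ℝ) < 1 - u := by linarith
  have hkey : Real.exp u * (1 - u) ≤ 1 := by
    have h := Real.add_one_le_exp (-u)
    calc Real.exp u * (1 - u) = Real.exp u * (-u + 1) := by ring
      _ ≤ Real.exp u * Real.exp (-u) := by nlinarith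
      _ = 1 := by rw [← Real.exp_add]; simp
  have h2 : -u / (1 - u) ≤ 1 - Real.exp u := by
    rw [div_le_iff₀ h1u]; nlinarith
  have h2pos : (0:ℝ) < -u / (1 - u) := by
    apply div_pos (by linarith) h1u
  have hn : n0 u = -(1 / (1 - Real.exp u)) := by
    unfold n0
    rw [show (1:ℝ) - Real.exp u = -(Real.exp u - 1) by ring, ← one_div_neg_eq_neg_one_div,
      neg_neg]
  have hpos1 : (0:ℝ) < 1 - Real.exp u := by linarith
  have habs : |n0 u| = 1 / (1 - Real.exp u) := by
    rw [hn, abs_neg, abs_of_pos (one_div_pos.2 hpos1)]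
  rw [habs]
  calc 1 / (1 - Real.exp u) ≤ 1 / (-u / (1 - u)) := one_div_le_one_div_of_le h2pos h2
    _ = (1 - u) / (-u) := one_div_div _ _

lemma abs_n0_add_one_le {u : ℝ} (hu : u ≤ -1) : |n0 u + 1| ≤ 2 * Real.exp u := by
  have he : Real.exp u ≤ 1/2 := by
    calc Real.exp u ≤ Real.exp (-1) := Real.exp_le_exp.2 hu
      _ ≤ 1/2 := by
          rw [Real.exp_neg]
          rw [inv_le_comm₀ (Real.exp_pos 1) (by norm_num)]
          have := Real.add_one_le_exp 1; linarith
  have hep := Real.exp_pos u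
  have hne : Real.exp u - 1 ≠ 0 := by linarith
  have heq : n0 u + 1 = Real.exp u / (Real.exp u - 1) := by
    unfold n0; field_simp; ring
  have hneg : Real.exp u - 1 < 0 := by linarith
  rw [heq, abs_div, abs_of_pos hep, abs_of_neg hneg,
    div_le_iff₀ (by linarith : (0:ℝ) < -(Real.exp u - 1))]
  nlinarith

lemma bnd_nonneg (t : ℝ) : 0 ≤ bnd t := by unfold bnd; positivity

lemma Fg_abs_le (x t : ℝ) : |Fg x t| ≤ |n0 (x * t) + f0 (x * t + x)| * t ^ 2 := by
  unfold Fg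
  rw [abs_mul, abs_mul]
  rw [show |t ^ 2| = t ^ 2 by exact abs_of_nonneg (sq_nonneg t)]
  calc |n0 (x * t) + f0 (x * t + x)| * t ^ 2 * |Real.sign t|
      ≤ |n0 (x * t) + f0 (x * t + x)| * t ^ 2 * 1 :=
        mul_le_mul_of_nonneg_left (abs_rsign_le t) (by positivity)
    _ = |n0 (x * t) + f0 (x * t + x)| * t ^ 2 := by ring

lemma Fg_le_bnd {x : ℝ} (hx : 1 ≤ x) (t : ℝ) : |Fg x t| ≤ bnd t := by
  have hx0 : (0:ℝ) < x := lt_of_lt_of_le one_pos hx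
  refine (Fg_abs_le x t).trans ?_
  set A := |n0 (x * t) + f0 (x * t + x)| with hA
  rcases lt_trichotomy t 0 with ht | ht | ht
  · -- t < 0
    rcases le_or_gt (-1 : ℝ) t with ht1 | ht1
    · -- -1 ≤ t < 0
      have hxt : x * t < 0 := mul_neg_of_pos_of_neg hx0 ht
      have hst : 0 < -t := by linarith
      have hxs : 0 < x * (-t) := by positivity
      have hAle : A ≤ 1 / (-t) + 2 := by
        calc A ≤ |n0 (x * t)| + |f0 (x * t + x)| := abs_add_le _ _
          _ ≤ (1 - x * t) / (-(x * t)) + 1 := by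
              have h1 := abs_n0_le hxt
              have h2 : |f0 (x * t + x)| ≤ 1 :=
                abs_le.2 ⟨by linarith [f0_pos (x*t+x)], f0_le_one _⟩
              linarith
          _ = 1 / (x * (-t)) + 1 + 1 := by
              rw [show -(x*t) = x * (-t) by ring, sub_div]
              have hd : x * t / (x * -t) = -1 := by
                rw [div_eq_iff hxs.ne']; ring
              rw [hd]; ring
          _ ≤ 1 / (-t) + 2 := by
              have : 1 / (x * (-t)) ≤ 1 / (-t) := by
                apply one_div_le_one_div_of_le hst
                nlinarith
              linarith
      calc A * t ^ 2 ≤ (1 / (-t) + 2) * t ^ 2 :=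
            mul_le_mul_of_nonneg_right hAle (sq_nonneg t)
        _ = -t + 2 * t^2 := by
            have h0 : t ≠ 0 := ht.ne
            rw [add_mul, one_div, inv_neg, neg_mul, sq, ← mul_assoc, inv_mul_cancel₀ h0, one_mul]
        _ ≤ 4 := by nlinarith
        _ ≤ bnd t := by
            unfold bnd
            have habs : |t| ≤ 1 := abs_le.2 ⟨ht1, by linarith⟩
            have hexp : (1:ℝ) ≤ Real.exp (1 - |t|) := by
              nlinarith [Real.add_one_le_exp (1 - |t|)]
            nlinarith [sq_nonneg t]
    · -- t < -1
      have hxt : x * t ≤ -1 := by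
        calc x * t ≤ 1 * t := mul_le_mul_of_nonpos_right hx (by linarith)
          _ = t := one_mul t
          _ ≤ -1 := by linarith
      have hxtt : x * t ≤ t := by
        calc x * t ≤ 1 * t := mul_le_mul_of_nonpos_right hx (by linarith)
          _ = t := one_mul t
      have hAle : A ≤ 3 * Real.exp (t + 1) := by
        have h1 : |n0 (x * t) + 1| ≤ 2 * Real.exp (x * t) := abs_n0_add_one_le hxt
        have h2 : |f0 (x * t + x) - 1| ≤ Real.exp (x * t + x) := by
          have := f0_add_f0_neg (x * t + x)
          have hf : f0 (x * t + x) - 1 = -(f0 (-(x * t + x))) := by linarith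
          rw [hf, abs_neg, abs_of_pos (f0_pos _)]
          calc f0 (-(x * t + x)) ≤ Real.exp (-(-(x * t + x))) := f0_le_exp_neg _
            _ = Real.exp (x * t + x) := by rw [neg_neg]
        have h3 : Real.exp (x * t) ≤ Real.exp (t + 1) := by
          apply Real.exp_le_exp.2; linarith
        have h4 : Real.exp (x * t + x) ≤ Real.exp (t + 1) := by
          apply Real.exp_le_exp.2
          have : x * t + x = x * (t + 1) := by ring
          rw [this]
          calc x * (t + 1) ≤ 1 * (t + 1) := mul_le_mul_of_nonpos_right hx (by linarith)
            _ = t + 1 := one_mul _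
        calc A = |(n0 (x * t) + 1) + (f0 (x * t + x) - 1)| := by rw [hA]; ring_nf
          _ ≤ |n0 (x * t) + 1| + |f0 (x * t + x) - 1| := abs_add_le _ _
          _ ≤ 3 * Real.exp (t + 1) := by linarith
      calc A * t ^ 2 ≤ 3 * Real.exp (t + 1) * t ^ 2 :=
            mul_le_mul_of_nonneg_right hAle (sq_nonneg t)
        _ ≤ bnd t := by
            unfold bnd
            rw [show |t| = -t from abs_of_neg ht, show (1:ℝ) - -t = t + 1 by ring]
            nlinarith [Real.exp_pos (t + 1), sq_nonneg t]
  · -- t = 0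
    subst ht
    simpa using bnd_nonneg 0
  · -- 0 < t
    have hxt : 0 < x * t := by positivity
    have hApos : A = n0 (x * t) + f0 (x * t + x) :=
      abs_of_pos (add_pos (n0_pos hxt) (f0_pos _))
    rcases le_or_gt t 1 with ht1 | ht1
    · -- 0 < t ≤ 1
      have hn : n0 (x * t) ≤ 1 / t := by
        calc n0 (x * t) ≤ 1 / (x * t) := n0_le_inv hxt
          _ ≤ 1 / t := one_div_le_one_div_of_le ht (by nlinarith)
      have hAle : A ≤ 1 / t + 1 := by
        rw [hApos]
        have := f0_le_one (x * t + x)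
        linarith
      calc A * t ^ 2 ≤ (1 / t + 1) * t ^ 2 :=
            mul_le_mul_of_nonneg_right hAle (sq_nonneg t)
        _ = t + t ^ 2 := by field_simp
        _ ≤ 2 := by nlinarith
        _ ≤ bnd t := by
            unfold bnd
            have habs : |t| ≤ 1 := abs_le.2 ⟨by linarith, ht1⟩
            have hexp : (1:ℝ) ≤ Real.exp (1 - |t|) := by
              nlinarith [Real.add_one_le_exp (1 - |t|)]
            nlinarith [sq_nonneg t]
    · -- 1 < t
      have htxt : t ≤ x * t := le_mul_of_one_le_left ht.le hx
      have hn : n0 (x * t) ≤ 2 * Real.exp (-t) := by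
        calc n0 (x * t) ≤ n0 t := n0_anti ht htxt
          _ ≤ 2 * Real.exp (-t) := n0_le_two_exp_neg ht1.le
      have hf : f0 (x * t + x) ≤ Real.exp (-t) := by
        calc f0 (x * t + x) ≤ Real.exp (-(x * t + x)) := f0_le_exp_neg _
          _ ≤ Real.exp (-t) := Real.exp_le_exp.2 (by linarith)
      have hAle : A ≤ 3 * Real.exp (-t) := by rw [hApos]; linarith
      calc A * t ^ 2 ≤ 3 * Real.exp (-t) * t ^ 2 :=
            mul_le_mul_of_nonneg_right hAle (sq_nonneg t)
        _ ≤ bnd t := by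
            unfold bnd
            rw [show |t| = t from abs_of_pos ht, show (1:ℝ) - t = -t + 1 by ring,
              Real.exp_add]
            have he1 : (1:ℝ) ≤ Real.exp 1 := by nlinarith [Real.add_one_le_exp 1]
            have hp := Real.exp_pos (-t)
            calc 3 * Real.exp (-t) * t ^ 2 ≤ 4 * (t ^ 2 + 1) * Real.exp (-t) := by
                  nlinarith [sq_nonneg t]
              _ ≤ 4 * (t ^ 2 + 1) * (Real.exp (-t) * Real.exp 1) := by
                  apply mul_le_mul_of_nonneg_left _ (by positivity : (0:ℝ) ≤ 4 * (t ^ 2 + 1))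
                  exact le_mul_of_one_le_right hp.le he1

lemma Fg_meas (x : ℝ) : Measurable (Fg x) := by
  unfold Fg n0 f0
  apply Measurable.mul
  · apply Measurable.mul
    · apply Measurable.add
      · simp only [one_div]
        exact ((Real.measurable_exp.comp (measurable_const.mul measurable_id)).sub
          measurable_const).inv
      · simp only [one_div]
        exact ((Real.measurable_exp.comp ((measurable_const.mul measurable_id).add
          measurable_const)).add measurable_const).inv
    · exact measurable_id.pow_const 2
  · exact measurable_rsign

lemma bnd_cont : Continuous bnd := by
  unfold bnd
  fun_prop

lemma bnd_integrableOn_Ioi : IntegrableOn bnd (Set.Ioi 0) := by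
  have h1 : IntegrableOn (fun x : ℝ => Real.exp (-x) * x ^ ((3:ℝ) - 1)) (Set.Ioi 0) :=
    Real.GammaIntegral_convergent (by norm_num)
  have h2 : IntegrableOn (fun x : ℝ => Real.exp (-(1:ℝ) * x)) (Set.Ioi 0) :=
    exp_neg_integrableOn_Ioi 0 one_pos
  have hg : IntegrableOn
      (fun x : ℝ => (4 * Real.exp 1) * (Real.exp (-x) * x ^ ((3:ℝ) - 1))
        + (4 * Real.exp 1) * Real.exp (-(1:ℝ) * x)) (Set.Ioi 0) :=
    (h1.const_mul _).add (h2.const_mul _)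
  apply hg.mono' bnd_cont.aestronglyMeasurable.restrict
  rw [ae_restrict_iff' measurableSet_Ioi]
  refine Filter.Eventually.of_forall fun t ht => ?_
  rw [Set.mem_Ioi] at ht
  have hrw : t ^ ((3:ℝ) - 1) = t ^ 2 := by
    rw [show ((3:ℝ) - 1) = ((2:ℕ):ℝ) by norm_num, Real.rpow_natCast]
  rw [hrw]
  unfold bnd
  rw [Real.norm_eq_abs, abs_of_nonneg (by positivity), abs_of_pos ht,
    show (1:ℝ) - t = -t + 1 by ring,
    Real.exp_add, show -(1:ℝ) * t = -t by ring]
  nlinarith [Real.exp_pos (-t)]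

lemma bnd_neg (t : ℝ) : bnd (-t) = bnd t := by unfold bnd; rw [abs_neg, neg_sq]

lemma bnd_integrable : Integrable bnd := by
  rw [← integrableOn_univ, ← Set.Iic_union_Ioi (a := (0:ℝ)), integrableOn_union]
  refine ⟨?_, bnd_integrableOn_Ioi⟩
  have hset : Set.Iic (0:ℝ) = (fun x : ℝ => -x) ⁻¹' (Set.Ici 0) := by
    ext y
    simp only [Set.mem_Iic, Set.mem_preimage, Set.mem_Ici]
    constructor <;> intro h <;> linarith
  have hfun : bnd = (bnd ∘ fun x : ℝ => -x) := by
    funext t; simp [Function.comp, bnd_neg]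
  rw [hset, hfun]
  rw [(Measure.measurePreserving_neg (volume : Measure ℝ)).integrableOn_comp_preimage
      (Homeomorph.neg ℝ).measurableEmbedding]
  rw [integrableOn_Ici_iff_integrableOn_Ioi]
  exact bnd_integrableOn_Ioi

lemma n0_tendsto_atTop : Tendsto n0 atTop (nhds 0) := by
  have h : Tendsto (fun u : ℝ => Real.exp u - 1) atTop atTop :=
    tendsto_atTop_add_const_right _ (-1) Real.tendsto_exp_atTop
  have h2 := h.inv_tendsto_atTop
  exact h2.congr fun u => by simp [n0, one_div]

lemma n0_tendsto_atBot : Tendsto n0 atBot (nhds (-1)) := by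
  have h : Tendsto (fun u : ℝ => Real.exp u - 1) atBot (nhds (-1)) := by
    have := Real.tendsto_exp_atBot.sub (tendsto_const_nhds (x := (1:ℝ)))
    simpa using this
  have h2 := h.inv₀ (by norm_num)
  rw [show ((-1:ℝ))⁻¹ = -1 by norm_num] at h2
  exact h2.congr fun u => by simp [n0, one_div]

lemma f0_tendsto_atTop : Tendsto f0 atTop (nhds 0) := by
  have h : Tendsto (fun u : ℝ => Real.exp u + 1) atTop atTop :=
    tendsto_atTop_add_const_right _ 1 Real.tendsto_exp_atTop
  have h2 := h.inv_tendsto_atTop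
  exact h2.congr fun u => by simp [f0, one_div]

lemma f0_tendsto_atBot : Tendsto f0 atBot (nhds 1) := by
  have h : Tendsto (fun u : ℝ => Real.exp u + 1) atBot (nhds 1) := by
    have := Real.tendsto_exp_atBot.add (tendsto_const_nhds (x := (1:ℝ)))
    simpa using this
  have h2 := h.inv₀ (by norm_num)
  rw [show ((1:ℝ))⁻¹ = 1 by norm_num] at h2
  exact h2.congr fun u => by simp [f0, one_div]

lemma tendsto_Fg {t : ℝ} (ht0 : t ≠ 0) (ht1 : t ≠ -1) :
    Tendsto (fun x => Fg x t) atTop (nhds (Glim t)) := by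
  have hplus : (fun x : ℝ => x * t + x) = fun x : ℝ => x * (t + 1) := by
    funext x; ring
  rcases lt_trichotomy t 0 with ht | ht | ht
  · rcases lt_trichotomy t (-1) with h1 | h1 | h1
    · -- t < -1
      have hmul : Tendsto (fun x : ℝ => x * t) atTop atBot :=
        Tendsto.atTop_mul_const_of_neg ht tendsto_id
      have hmul2 : Tendsto (fun x : ℝ => x * t + x) atTop atBot := by
        rw [hplus]
        exact Tendsto.atTop_mul_const_of_neg (by linarith) tendsto_id
      have hlim : Tendsto (fun x => Fg x t) atTop
          (nhds ((-1 + 1) * t ^ 2 * Real.sign t)) := by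
        unfold Fg
        exact (((n0_tendsto_atBot.comp hmul).add
          (f0_tendsto_atBot.comp hmul2)).mul_const _).mul_const _
      have : Glim t = (-1 + 1) * t ^ 2 * Real.sign t := by
        unfold Glim
        rw [if_neg (by simp only [Set.mem_Ioo]; intro ⟨a, b⟩; linarith)]
        ring
      rwa [← this] at hlim
    · exact absurd h1 ht1
    · -- -1 < t < 0
      have hmul : Tendsto (fun x : ℝ => x * t) atTop atBot :=
        Tendsto.atTop_mul_const_of_neg ht tendsto_id
      have hmul2 : Tendsto (fun x : ℝ => x * t + x) atTop atTop := by
        rw [hplus]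
        exact Tendsto.atTop_mul_const (by linarith) tendsto_id
      have hlim : Tendsto (fun x => Fg x t) atTop
          (nhds ((-1 + 0) * t ^ 2 * Real.sign t)) := by
        unfold Fg
        exact (((n0_tendsto_atBot.comp hmul).add
          (f0_tendsto_atTop.comp hmul2)).mul_const _).mul_const _
      have : Glim t = (-1 + 0) * t ^ 2 * Real.sign t := by
        unfold Glim
        rw [if_pos (by exact ⟨h1, ht⟩), Real.sign_of_neg ht]
        ring
      rwa [← this] at hlim
  · exact absurd ht ht0
  · -- 0 < t
    have hmul : Tendsto (fun x : ℝ => x * t) atTop atTop :=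
      Tendsto.atTop_mul_const ht tendsto_id
    have hmul2 : Tendsto (fun x : ℝ => x * t + x) atTop atTop := by
      rw [hplus]
      exact Tendsto.atTop_mul_const (by linarith) tendsto_id
    have hlim : Tendsto (fun x => Fg x t) atTop
        (nhds ((0 + 0) * t ^ 2 * Real.sign t)) := by
      unfold Fg
      exact (((n0_tendsto_atTop.comp hmul).add
        (f0_tendsto_atTop.comp hmul2)).mul_const _).mul_const _
    have : Glim t = (0 + 0) * t ^ 2 * Real.sign t := by
      unfold Glim
      rw [if_neg (by simp only [Set.mem_Ioo]; intro ⟨a, b⟩; linarith)]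
      ring
    rwa [← this] at hlim

lemma Glim_integral : ∫ t, Glim t = 1 / 3 := by
  have h : Glim = Set.indicator (Set.Ioo (-1 : ℝ) 0) (fun t => t ^ 2) := by
    funext t
    simp [Glim, Set.indicator_apply]
  rw [h, integral_indicator measurableSet_Ioo, ← integral_Ioc_eq_integral_Ioo,
    ← intervalIntegral.integral_of_le (by norm_num : (-1:ℝ) ≤ 0)]
  rw [integral_pow]
  norm_num

lemma gamma0_div {x : ℝ} (hx : 0 < x) : gamma0 x / x ^ 3 = ∫ t, Fg x t := by
  have h1 : (∫ t, k0 x (x * t)) = |x⁻¹| • gamma0 x := by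
    rw [gamma0]
    exact MeasureTheory.Measure.integral_comp_mul_left (k0 x) x
  have h2 : (fun t => k0 x (x * t)) = fun t => x ^ 2 * Fg x t := by
    funext t
    unfold k0 Fg
    rcases lt_trichotomy t 0 with h | h | h
    · rw [Real.sign_of_neg h, Real.sign_of_neg (mul_neg_of_pos_of_neg hx h)]; ring
    · subst h; simp
    · rw [Real.sign_of_pos h, Real.sign_of_pos (mul_pos hx h)]; ring
  rw [h2] at h1
  rw [MeasureTheory.integral_const_mul] at h1
  rw [abs_of_pos (inv_pos.2 hx), smul_eq_mul] at h1
  have hx3 : x ^ 3 ≠ 0 := by positivity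
  rw [div_eq_iff hx3]
  have hx0 : x ≠ 0 := hx.ne'
  field_simp at h1
  linarith [h1]

lemma ae_tendsto_Fg : ∀ᵐ t : ℝ, Tendsto (fun x => Fg x t) atTop (nhds (Glim t)) := by
  have hmeas : (volume : Measure ℝ) ({0, -1} : Set ℝ) = 0 := by
    apply Set.Finite.measure_zero
    exact (Set.finite_singleton (-1:ℝ)).insert 0
  have h := (measure_eq_zero_iff_ae_notMem (μ := (volume : Measure ℝ))
    (s := ({0, -1} : Set ℝ))).1 hmeas
  filter_upwards [h] with t ht
  simp only [Set.mem_insert_iff, Set.mem_singleton_iff, not_or] at ht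
  exact tendsto_Fg ht.1 ht.2

theorem gamma0_cubic_growth :
    Filter.Tendsto (fun x : ℝ => gamma0 x / x ^ 3) Filter.atTop (nhds (1 / 3)) := by
  have hmain : Tendsto (fun x : ℝ => ∫ t, Fg x t) atTop (nhds (∫ t, Glim t)) := by
    apply tendsto_integral_filter_of_dominated_convergence bnd
    · exact Filter.Eventually.of_forall fun x => (Fg_meas x).aestronglyMeasurable
    · filter_upwards [eventually_ge_atTop (1:ℝ)] with x hx
      exact Filter.Eventually.of_forall fun t => by
        rw [Real.norm_eq_abs]; exact Fg_le_bnd hx t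
    · exact bnd_integrable
    · exact ae_tendsto_Fg
  rw [Glim_integral] at hmain
  apply hmain.congr'
  filter_upwards [eventually_gt_atTop (0:ℝ)] with x hx
  exact (gamma0_div hx).symm
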